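/- Let X = (I, P) be a PCS. Define P(!X) = {u^! | u ∈ P}^⊥⊥ ⊆ (ℝ≥0)^{Multiset I}, where u^! is the function μ ↦ u^μ on finite multisets. Then !X = (Multiset I, P(!X)) is a PCS: for every finite multiset μ over I there exists U ∈ P(!X) with U_μ > 0, and for every μ there exists A > 0 with U_μ ≤ A for all U ∈ P(!X). -/

import Mathlib

open scoped NNReal ENNReal

/-- The pairing `⟨u,u'⟩ = ∑' i, u i * u' i` in `[0,∞]`. -/
noncomputable def pairing {I : Type*} (u u' : I → ℝ≥0) : ℝ≥0∞ :=
  ∑' i, (u i : ℝ≥0∞) * (u' i : ℝ≥0∞)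

/-- The polar of a set of nonnegative vectors. -/
def polar {I : Type*} (X : Set (I → ℝ≥0)) : Set (I → ℝ≥0) :=
  {u' | ∀ u ∈ X, pairing u u' ≤ 1}

/-- A probabilistic coherence space structure on the set `P`. -/
def IsPCS {I : Type*} (P : Set (I → ℝ≥0)) : Prop :=
  polar (polar P) = P ∧
  (∀ a : I, ∃ u ∈ P, 0 < u a) ∧
  (∀ a : I, ∃ A : ℝ≥0, 0 < A ∧ ∀ u ∈ P, u a ≤ A)

/-- `u^μ`: the product, with multiplicities, of the values `u a` for `a ∈ μ`. -/
noncomputable def mpow {I : Type*} (u : I → ℝ≥0) (μ : Multiset I) : ℝ≥0 := (μ.map u).prod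

/-- Kleisli application `ŝ(u)_b = ∑' μ, s (μ,b) * u^μ` in `[0,∞]`. -/
noncomputable def kApp {I J : Type*} (s : Multiset I × J → ℝ≥0) (u : I → ℝ≥0) (b : J) : ℝ≥0∞ :=
  ∑' μ : Multiset I, (s (μ, b) : ℝ≥0∞) * (mpow u μ : ℝ≥0∞)

/-- `s` is a Kleisli morphism from `P` to `Q`. -/
def IsKleisli {I J : Type*} (s : Multiset I × J → ℝ≥0)
    (P : Set (I → ℝ≥0)) (Q : Set (J → ℝ≥0)) : Prop :=
  ∀ u ∈ P, (∀ b, kApp s u b ≠ ⊤) ∧ (fun b => (kApp s u b).toNNReal) ∈ Q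

lemma pairing_comm' {I : Type*} (u u' : I → ℝ≥0) : pairing u u' = pairing u' u :=
  tsum_congr fun i => mul_comm _ _

lemma subset_bipolar' {I : Type*} (X : Set (I → ℝ≥0)) : X ⊆ polar (polar X) :=
  fun u hu v hv => (pairing_comm' v u) ▸ hv u hu

lemma polar_antitone' {I : Type*} {X Y : Set (I → ℝ≥0)} (h : X ⊆ Y) :
    polar Y ⊆ polar X := fun v hv u hu => hv u (h hu)

lemma tripolar' {I : Type*} (X : Set (I → ℝ≥0)) :
    polar (polar (polar X)) = polar X :=
  Set.Subset.antisymm (polar_antitone' (subset_bipolar' X)) (subset_bipolar' (polar X))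

lemma sum_mem_polar' {I A : Type*} (X : Set (I → ℝ≥0)) (F : Finset A)
    (c : A → ℝ≥0) (hc : ∑ a ∈ F, c a ≤ 1) (u : A → I → ℝ≥0)
    (hu : ∀ a ∈ F, u a ∈ polar X) :
    (fun i => ∑ a ∈ F, c a * u a i) ∈ polar X := by
  intro v hv
  have h1 : pairing v (fun i => ∑ a ∈ F, c a * u a i)
      = ∑ a ∈ F, (c a : ℝ≥0∞) * pairing v (u a) := by
    unfold pairing
    have : ∀ i : I, ((v i : ℝ≥0∞) * ((∑ a ∈ F, c a * u a i : ℝ≥0) : ℝ≥0∞))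
        = ∑ a ∈ F, (c a : ℝ≥0∞) * ((v i : ℝ≥0∞) * (u a i : ℝ≥0∞)) := by
      intro i
      push_cast
      rw [Finset.mul_sum]
      exact Finset.sum_congr rfl fun a _ => by ring
    simp only [this]
    rw [Summable.tsum_finsetSum (fun a _ => ENNReal.summable)]
    exact Finset.sum_congr rfl fun a _ => ENNReal.tsum_mul_left
  rw [h1]
  calc ∑ a ∈ F, (c a : ℝ≥0∞) * pairing v (u a)
      ≤ ∑ a ∈ F, (c a : ℝ≥0∞) * 1 :=
        Finset.sum_le_sum fun a ha => mul_le_mul_right (hu a ha v hv) _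
    _ = ((∑ a ∈ F, c a : ℝ≥0) : ℝ≥0∞) := by push_cast; simp
    _ ≤ 1 := by exact_mod_cast hc

theorem excl_isPCS {I : Type*} [Countable I] (P : Set (I → ℝ≥0)) (hP : IsPCS P) :
    IsPCS (polar (polar {w : Multiset I → ℝ≥0 | ∃ u ∈ P, w = fun μ => mpow u μ})) := by
  obtain ⟨hPeq, hPpos, hPbd⟩ := hP
  set S : Set (Multiset I → ℝ≥0) := {w | ∃ u ∈ P, w = fun μ => mpow u μ} with hS
  refine ⟨tripolar' (polar S), ?_, ?_⟩
  · -- positivity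
    intro μ
    classical
    set F := μ.toFinset with hF
    choose uu huu huupos using hPpos
    set n : ℝ≥0 := (F.card : ℝ≥0) with hn
    set v : I → ℝ≥0 := fun i => ∑ a ∈ F, n⁻¹ * uu a i with hv
    have hvP : v ∈ P := by
      rw [← hPeq]
      refine sum_mem_polar' (polar P) F (fun _ => n⁻¹) ?_ uu
        (fun a _ => hPeq ▸ subset_bipolar' P (huu a))
      rw [Finset.sum_const, nsmul_eq_mul]
      rcases Nat.eq_zero_or_pos F.card with h0 | h0
      · simp [hn, h0]
      · have hn0 : (F.card : ℝ≥0) ≠ 0 := by exact_mod_cast Nat.pos_iff_ne_zero.mp h0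
        rw [hn, mul_inv_cancel₀ hn0]
    have hvpos : ∀ a ∈ μ, 0 < v a := by
      intro a ha
      have haF : a ∈ F := Multiset.mem_toFinset.mpr ha
      have hcard : 0 < F.card := Finset.card_pos.mpr ⟨a, haF⟩
      have hn0 : (0 : ℝ≥0) < n⁻¹ := by
        rw [hn]
        exact inv_pos.mpr (by exact_mod_cast hcard)
      calc (0 : ℝ≥0) < n⁻¹ * uu a a := mul_pos hn0 (huupos a)
        _ ≤ ∑ b ∈ F, n⁻¹ * uu b a :=
          Finset.single_le_sum (f := fun b => n⁻¹ * uu b a) (fun b _ => zero_le) haF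
        _ = v a := rfl
    refine ⟨fun μ' => mpow v μ', subset_bipolar' S ⟨v, hvP, rfl⟩, ?_⟩
    have : mpow v μ ≠ 0 := by
      rw [mpow]
      apply Multiset.prod_ne_zero
      intro h0
      obtain ⟨a, ha, ha0⟩ := Multiset.mem_map.mp h0
      exact absurd (ha0 ▸ hvpos a ha) (lt_irrefl 0)
    exact pos_iff_ne_zero.mpr this
  · -- boundedness
    intro μ
    classical
    choose A hApos hAbd using hPbd
    set B : ℝ≥0 := mpow A μ with hB
    have hB0 : B ≠ 0 := by
      rw [hB, mpow]
      apply Multiset.prod_ne_zero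
      intro h0
      obtain ⟨a, _, ha0⟩ := Multiset.mem_map.mp h0
      exact absurd (ha0 ▸ hApos a) (lt_irrefl 0)
    have hBpos : 0 < B := pos_iff_ne_zero.mpr hB0
    set v' : Multiset I → ℝ≥0 := fun μ' => if μ' = μ then B⁻¹ else 0 with hv'
    have hmle : ∀ u ∈ P, mpow u μ ≤ B := by
      intro u hu
      rw [hB, mpow, mpow]
      exact Multiset.prod_map_le_prod_map u A fun a _ => hAbd a u hu
    have hv'polar : v' ∈ polar S := by
      rintro w ⟨u, hu, rfl⟩
      have : pairing (fun μ' => mpow u μ') v' = (mpow u μ : ℝ≥0∞) * (B⁻¹ : ℝ≥0) := by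
        rw [pairing]
        rw [tsum_eq_single μ (by
          intro μ' hμ'
          simp [hv', hμ'])]
        simp [hv']
      rw [this]
      calc (mpow u μ : ℝ≥0∞) * (B⁻¹ : ℝ≥0) ≤ (B : ℝ≥0∞) * (B⁻¹ : ℝ≥0) := by
            exact mul_le_mul_left (by exact_mod_cast hmle u hu) _
        _ = 1 := by
            rw [← ENNReal.coe_mul, mul_inv_cancel₀ hB0, ENNReal.coe_one]
    refine ⟨B, hBpos, fun w hw => ?_⟩
    have h1 : pairing w v' ≤ 1 := (pairing_comm' w v') ▸ hw v' hv'polar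
    have h2 : (w μ : ℝ≥0∞) * (B⁻¹ : ℝ≥0) ≤ pairing w v' := by
      have := ENNReal.le_tsum (f := fun μ' => (w μ' : ℝ≥0∞) * (v' μ' : ℝ≥0∞)) μ
      simpa [hv', pairing] using this
    have h3 : (w μ : ℝ≥0∞) * (B⁻¹ : ℝ≥0) ≤ 1 := h2.trans h1
    have h4 : (w μ : ℝ≥0∞) ≤ B := by
      have := mul_le_mul_left h3 (B : ℝ≥0∞)
      rwa [one_mul, mul_assoc, ← ENNReal.coe_mul, inv_mul_cancel₀ hB0,
        ENNReal.coe_one, mul_one] at this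
    exact_mod_cast h4
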